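/- arXiv:1209.0305 — 4 statements merged into one kernel-verified Lean document; each statement's English description precedes it below -/
import Mathlib

section
/- Let μ ∈ ℝ, σ > 0 with μ = σ²/2 (i.e. Merton ratio π* = 1/2). Then the function h₁(x) = (1/σ²)(log((1-x)/x))² satisfies L h₁(x) = 1 for all x ∈ (0,1), where L v(x) = x(1-x)(μ - σ²x) v'(x) + (σ²/2) x²(1-x)² v''(x). -/
/-- For `μ = σ²/2` (Merton ratio `π* = 1/2`), the function
`h₁(x) = (1/σ²)(log((1-x)/x))²` satisfies `L h₁ = 1` on `(0,1)`, where
`L v(x) = x(1-x)(μ - σ²x) v'(x) + (σ²/2) x²(1-x)² v''(x)`. -/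
theorem stmt_4 (μ σ : ℝ) (hσ : 0 < σ) (hμ : μ = σ ^ 2 / 2)
    (h₁ : ℝ → ℝ)
    (hh₁ : ∀ x : ℝ, h₁ x = (1 / σ ^ 2) * (Real.log ((1 - x) / x)) ^ 2) :
    ∀ x ∈ Set.Ioo (0 : ℝ) 1,
      x * (1 - x) * (μ - σ ^ 2 * x) * deriv h₁ x
        + σ ^ 2 / 2 * (x ^ 2 * (1 - x) ^ 2) * deriv (deriv h₁) x = 1 := by
  set c : ℝ := 1 / σ ^ 2 with hc
  set D : ℝ → ℝ := fun y =>
    c * (2 * (Real.log (1 - y) - Real.log y) * ((1 - y)⁻¹ * (-1) - y⁻¹)) with hD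
  -- derivative of h₁ on (0,1)
  have key : ∀ y ∈ Set.Ioo (0 : ℝ) 1, HasDerivAt h₁ (D y) y := by
    intro y hy
    obtain ⟨hy0, hy1⟩ := hy
    have hy1' : (0:ℝ) < 1 - y := by linarith
    have hg : HasDerivAt (fun z => Real.log (1 - z) - Real.log z)
        ((1 - y)⁻¹ * (-1) - y⁻¹) y := by
      have h1 : HasDerivAt (fun z : ℝ => 1 - z) (-1) y := (hasDerivAt_id y).const_sub 1
      have h2 : HasDerivAt (fun z : ℝ => Real.log (1 - z)) ((1 - y)⁻¹ * (-1)) y :=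
        (Real.hasDerivAt_log hy1'.ne').comp y h1
      exact h2.sub (Real.hasDerivAt_log hy0.ne')
    have hf : HasDerivAt (fun z => c * (Real.log (1 - z) - Real.log z) ^ 2) (D y) y := by
      have : HasDerivAt (fun z => c * (Real.log (1 - z) - Real.log z) ^ 2)
          (c * ((2:ℕ) * (Real.log (1 - y) - Real.log y) ^ (2 - 1) * ((1 - y)⁻¹ * (-1) - y⁻¹))) y :=
        (hg.pow 2).const_mul c
      convert this using 1
      simp only [D]
      ring
    refine hf.congr_of_eventuallyEq ?_
    have hmem : Set.Ioo (0:ℝ) 1 ∈ nhds y := isOpen_Ioo.mem_nhds ⟨hy0, hy1⟩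
    filter_upwards [hmem] with z hz
    obtain ⟨hz0, hz1⟩ := hz
    rw [hh₁, Real.log_div (by linarith : (1:ℝ) - z ≠ 0) hz0.ne']
  intro x hx
  obtain ⟨hx0, hx1⟩ := hx
  have hx1' : (0:ℝ) < 1 - x := by linarith
  -- value of deriv h₁
  have hd1 : deriv h₁ x = D x := (key x ⟨hx0, hx1⟩).deriv
  -- deriv h₁ equals D near x
  have hEq : deriv h₁ =ᶠ[nhds x] D := by
    have hmem : Set.Ioo (0:ℝ) 1 ∈ nhds x := isOpen_Ioo.mem_nhds ⟨hx0, hx1⟩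
    filter_upwards [hmem] with z hz
    exact (key z hz).deriv
  -- derivative of D at x
  have hg : HasDerivAt (fun z => Real.log (1 - z) - Real.log z)
      ((1 - x)⁻¹ * (-1) - x⁻¹) x := by
    have h1 : HasDerivAt (fun z : ℝ => 1 - z) (-1) x := (hasDerivAt_id x).const_sub 1
    have h2 : HasDerivAt (fun z : ℝ => Real.log (1 - z)) ((1 - x)⁻¹ * (-1)) x :=
      (Real.hasDerivAt_log hx1'.ne').comp x h1
    exact h2.sub (Real.hasDerivAt_log hx0.ne')
  have hp : HasDerivAt (fun z : ℝ => (1 - z)⁻¹ * (-1) - z⁻¹)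
      ((-(-1) / (1 - x) ^ 2) * (-1) - (-1 / x ^ 2)) x := by
    have h1 : HasDerivAt (fun z : ℝ => 1 - z) (-1) x := (hasDerivAt_id x).const_sub 1
    have h2 : HasDerivAt (fun z : ℝ => (1 - z)⁻¹) (-(-1) / (1 - x) ^ 2) x :=
      h1.inv hx1'.ne'
    have h3 : HasDerivAt (fun z : ℝ => z⁻¹) (-1 / x ^ 2) x :=
      (hasDerivAt_id x).inv hx0.ne'
    exact (h2.mul_const (-1)).sub h3
  have hDd : HasDerivAt D
      ((2 * ((1 - x)⁻¹ * (-1) - x⁻¹) * ((1 - x)⁻¹ * (-1) - x⁻¹)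
        + 2 * (Real.log (1 - x) - Real.log x)
          * ((-(-1) / (1 - x) ^ 2) * (-1) - (-1 / x ^ 2))) * c) x := by
    have : HasDerivAt (fun z => c * (2 * (Real.log (1 - z) - Real.log z) * ((1 - z)⁻¹ * (-1) - z⁻¹)))
        (c * (2 * ((1 - x)⁻¹ * (-1) - x⁻¹) * ((1 - x)⁻¹ * (-1) - x⁻¹)
          + 2 * (Real.log (1 - x) - Real.log x) * ((-(-1) / (1 - x) ^ 2) * (-1) - (-1 / x ^ 2)))) x :=
      ((hg.const_mul 2).mul hp).const_mul c
    convert this using 1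
    ring
  have hd2 : deriv (deriv h₁) x = _ := hEq.deriv_eq.trans hDd.deriv
  rw [hd1, hd2, hD, hc, hμ]
  set L := Real.log (1 - x) - Real.log x
  have hσ2 : σ ^ 2 ≠ 0 := pow_ne_zero 2 hσ.ne'
  field_simp
  ring
end

section
/- Let σ > 0, μ = σ²/2, and λ ∈ ℝ. Define v(x) = (λ/σ²)(log(x/(1-x)))² + (1/2) log(4x(1-x)) for x ∈ (0,1), and g(x) = x(μ - (σ²/2)x). Then for every π ∈ (0,1), L v(π) + g(π) - λ = 0, where L v(π) = π(1-π)(μ - σ²π) v'(π) + (σ²/2) π²(1-π)² v''(π). In particular, conditions (iii) and (v) of the Verification Theorem (L v + g - λ ≤ 0 on (0,1), with equality on the continuation region) hold for this v and λ. -/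
/-- For `μ = σ²/2`, any `λ ∈ ℝ`, and the candidate value function
`v(x) = (λ/σ²)(log(x/(1-x)))² + (1/2) log(4x(1-x))`, one has
`L v(π) + g(π) - λ = 0` for all `π ∈ (0,1)`, where
`L v(π) = π(1-π)(μ - σ²π) v'(π) + (σ²/2) π²(1-π)² v''(π)` and
`g(x) = x(μ - σ²/2 x)`. -/
theorem stmt_8 (μ σ lam : ℝ) (hσ : 0 < σ) (hμ : μ = σ ^ 2 / 2)
    (v g : ℝ → ℝ)
    (hv : ∀ x : ℝ, v x = (lam / σ ^ 2) * (Real.log (x / (1 - x))) ^ 2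
        + (1 / 2) * Real.log (4 * x * (1 - x)))
    (hg : ∀ x : ℝ, g x = x * (μ - σ ^ 2 / 2 * x)) :
    ∀ π ∈ Set.Ioo (0 : ℝ) 1,
      π * (1 - π) * (μ - σ ^ 2 * π) * deriv v π
        + σ ^ 2 / 2 * (π ^ 2 * (1 - π) ^ 2) * deriv (deriv v) π
        + g π - lam = 0 := by
  intro π hπ
  obtain ⟨hπ0, hπ1⟩ := hπ
  have h1 : (0:ℝ) < 1 - π := by linarith
  set c := lam / σ ^ 2 with hc
  set f : ℝ → ℝ := fun x =>
    c * (Real.log x - Real.log (1 - x)) ^ 2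
      + (1/2) * (Real.log 4 + (Real.log x + Real.log (1 - x))) with hfdef
  have hveq : ∀ x ∈ Set.Ioo (0:ℝ) 1, v x = f x := by
    rintro x ⟨hx0, hx1⟩
    have hx1' : (0:ℝ) < 1 - x := by linarith
    rw [hv, hfdef]
    rw [Real.log_div (ne_of_gt hx0) (ne_of_gt hx1'),
      Real.log_mul (by positivity) (ne_of_gt hx1'),
      Real.log_mul (by norm_num) (ne_of_gt hx0)]
    ring
  set D1 : ℝ → ℝ := fun x =>
    c * (2 * ((Real.log x - Real.log (1 - x)) * (x⁻¹ + (1 - x)⁻¹)))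
      + (1/2) * (x⁻¹ - (1 - x)⁻¹) with hD1def
  -- first derivative
  have hfD : ∀ x ∈ Set.Ioo (0:ℝ) 1, HasDerivAt f (D1 x) x := by
    rintro x ⟨hx0, hx1⟩
    have hx1' : (0:ℝ) < 1 - x := by linarith
    have hsub : HasDerivAt (fun x : ℝ => 1 - x) (-1) x := by
      simpa using (hasDerivAt_id x).const_sub (1:ℝ)
    have hlog1 : HasDerivAt Real.log x⁻¹ x := Real.hasDerivAt_log hx0.ne'
    have hlog2 : HasDerivAt (fun x : ℝ => Real.log (1 - x)) ((1 - x)⁻¹ * (-1)) x :=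
      (Real.hasDerivAt_log hx1'.ne').comp x hsub
    have hu : HasDerivAt (fun x : ℝ => Real.log x - Real.log (1 - x))
        (x⁻¹ - (1 - x)⁻¹ * (-1)) x := hlog1.sub hlog2
    have hu2 : HasDerivAt (fun x : ℝ => (Real.log x - Real.log (1 - x)) ^ 2)
        ((2:ℕ) * (Real.log x - Real.log (1 - x)) ^ 1 * (x⁻¹ - (1 - x)⁻¹ * (-1))) x :=
      hu.pow 2
    have hH : HasDerivAt f
        (c * ((2:ℕ) * (Real.log x - Real.log (1 - x)) ^ 1 * (x⁻¹ - (1 - x)⁻¹ * (-1)))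
          + (1/2) * (0 + (x⁻¹ + (1 - x)⁻¹ * (-1)))) x := by
      exact (hu2.const_mul c).add
        (((hasDerivAt_const x (Real.log 4)).add (hlog1.add hlog2)).const_mul (1/2))
    convert hH using 1
    rw [hD1def]; push_cast; ring
  have hvderiv : ∀ x ∈ Set.Ioo (0:ℝ) 1, deriv v x = D1 x := by
    intro x hx
    have hev : v =ᶠ[nhds x] f :=
      Filter.eventuallyEq_of_mem (isOpen_Ioo.mem_nhds hx) hveq
    rw [hev.deriv_eq, (hfD x hx).deriv]
  -- second derivative
  have hsub : HasDerivAt (fun x : ℝ => 1 - x) (-1) π := by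
    simpa using (hasDerivAt_id π).const_sub (1:ℝ)
  have hlog1 : HasDerivAt Real.log π⁻¹ π := Real.hasDerivAt_log hπ0.ne'
  have hlog2 : HasDerivAt (fun x : ℝ => Real.log (1 - x)) ((1 - π)⁻¹ * (-1)) π :=
    (Real.hasDerivAt_log h1.ne').comp π hsub
  have hu : HasDerivAt (fun x : ℝ => Real.log x - Real.log (1 - x))
      (π⁻¹ - (1 - π)⁻¹ * (-1)) π := hlog1.sub hlog2
  have hix : HasDerivAt (fun x : ℝ => x⁻¹) (-(π^2)⁻¹) π := hasDerivAt_inv hπ0.ne'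
  have hi1x : HasDerivAt (fun x : ℝ => (1 - x)⁻¹) (-((1-π)^2)⁻¹ * (-1)) π :=
    (hasDerivAt_inv h1.ne').comp π hsub
  have hp : HasDerivAt (fun x : ℝ => x⁻¹ + (1 - x)⁻¹)
      (-(π^2)⁻¹ + -((1-π)^2)⁻¹ * (-1)) π := hix.add hi1x
  have hD1' : HasDerivAt D1
      (c * (2 * ((π⁻¹ - (1 - π)⁻¹ * (-1)) * (π⁻¹ + (1 - π)⁻¹)
          + (Real.log π - Real.log (1 - π)) * (-(π^2)⁻¹ + -((1-π)^2)⁻¹ * (-1))))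
        + (1/2) * (-(π^2)⁻¹ - -((1-π)^2)⁻¹ * (-1))) π :=
    (((hu.mul hp).const_mul 2).const_mul c).add ((hix.sub hi1x).const_mul (1/2))
  have hev2 : deriv v =ᶠ[nhds π] D1 :=
    Filter.eventuallyEq_of_mem (isOpen_Ioo.mem_nhds ⟨hπ0, hπ1⟩) hvderiv
  rw [hvderiv π ⟨hπ0, hπ1⟩, hev2.deriv_eq, hD1'.deriv, hg, hD1def, hμ, hc]
  have hσ2 : σ ^ 2 ≠ 0 := by positivity
  field_simp
  ring
end

section
/- Let σ > 0 and h > 0. Set b = e^{σ√h}/(1 + e^{σ√h}), a = 1 - b, λ = σ²(b - 1/2)/(2 log(b/(1-b))), v(x) = (λ/σ²)(log(x/(1-x)))² + (1/2) log(4x(1-x)), and c = v(1/2) - v(b). Then: (i) v(1-x) = v(x) for all x ∈ (0,1); (ii) v is nonincreasing on [1/2, b]; and consequently (iii) v(π') - v(π) ≤ c for all π, π' ∈ [a, b]. -/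
private lemma hasDerivAt_L (x : ℝ) (h0 : 0 < x) (h1 : x < 1) :
    HasDerivAt (fun y : ℝ => Real.log (y / (1 - y))) (1 / (x * (1 - x))) x := by
  have h1x : (0:ℝ) < 1 - x := by linarith
  have d1 : HasDerivAt (fun y : ℝ => 1 - y) (-1) x := by
    simpa using (hasDerivAt_id x).const_sub 1
  have d2 : HasDerivAt (fun y : ℝ => y / (1 - y))
      ((1 * (1 - x) - x * (-1)) / (1 - x) ^ 2) x :=
    (hasDerivAt_id x).div d1 h1x.ne'
  have d3 := d2.log (by positivity : x / (1 - x) ≠ 0)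
  convert d3 using 1
  field_simp
  ring

private lemma hasDerivAt_Q (x : ℝ) (h0 : 0 < x) (h1 : x < 1) :
    HasDerivAt (fun y : ℝ => Real.log (4 * y * (1 - y))) ((1 - 2 * x) / (x * (1 - x))) x := by
  have h1x : (0:ℝ) < 1 - x := by linarith
  have d1 : HasDerivAt (fun y : ℝ => 1 - y) (-1) x := by
    simpa using (hasDerivAt_id x).const_sub 1
  have dm : HasDerivAt (fun y : ℝ => 4 * y * (1 - y)) (4 * 1 * (1 - x) + 4 * x * (-1)) x := by
    exact ((hasDerivAt_id x).const_mul 4).mul d1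
  have d3 := dm.log (by positivity : 4 * x * (1 - x) ≠ 0)
  convert d3 using 1
  field_simp
  ring

set_option maxHeartbeats 1000000 in
/-- In the explicit example (`γ = 0`, `π* = 1/2`), with
`b = e^{σ√h}/(1+e^{σ√h})`, `a = 1-b`, `λ = σ²(b-1/2)/(2 log(b/(1-b)))`,
`v(x) = (λ/σ²)(log(x/(1-x)))² + (1/2) log(4x(1-x))`, `c = v(1/2) - v(b)`:
(i) `v(1-x) = v(x)` for `x ∈ (0,1)`; (ii) `v` is nonincreasing on `[1/2, b]`;
and (iii) `v(π') - v(π) ≤ c` for all `π, π' ∈ [a,b]`. -/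
theorem stmt_11 (σ h : ℝ) (hσ : 0 < σ) (hh : 0 < h)
    (a b lam c : ℝ)
    (hb : b = Real.exp (σ * Real.sqrt h) / (1 + Real.exp (σ * Real.sqrt h)))
    (ha : a = 1 - b)
    (hlam : lam = σ ^ 2 * (b - 1 / 2) / (2 * Real.log (b / (1 - b))))
    (v : ℝ → ℝ)
    (hv : ∀ x : ℝ, v x = (lam / σ ^ 2) * (Real.log (x / (1 - x))) ^ 2
        + (1 / 2) * Real.log (4 * x * (1 - x)))
    (hc : c = v (1 / 2) - v b) :
    (∀ x ∈ Set.Ioo (0 : ℝ) 1, v (1 - x) = v x) ∧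
    AntitoneOn v (Set.Icc (1 / 2) b) ∧
    (∀ π ∈ Set.Icc a b, ∀ π' ∈ Set.Icc a b, v π' - v π ≤ c) := by
  set t := σ * Real.sqrt h with ht
  have ht0 : 0 < t := mul_pos hσ (Real.sqrt_pos.mpr hh)
  have hE1 : 1 < Real.exp t := by have := Real.add_one_le_exp t; linarith
  have hE0 : 0 < Real.exp t := Real.exp_pos t
  have hden : (0:ℝ) < 1 + Real.exp t := by linarith
  have hb2 : b < 1 := by rw [hb]; rw [div_lt_one hden]; linarith
  have hb1 : 1 / 2 < b := by
    rw [hb, lt_div_iff₀ hden]; linarith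
  have h1b : 1 - b = 1 / (1 + Real.exp t) := by
    rw [hb]; field_simp
    ring
  have hlogbb : Real.log (b / (1 - b)) = t := by
    have : b / (1 - b) = Real.exp t := by
      rw [h1b, hb]; field_simp
    rw [this, Real.log_exp]
  -- part (i)
  have sym : ∀ x ∈ Set.Ioo (0 : ℝ) 1, v (1 - x) = v x := by
    intro x hx
    obtain ⟨hx0, hx1⟩ := hx
    have e1 : (1:ℝ) - (1 - x) = x := by ring
    have e2 : Real.log ((1 - x) / (1 - (1 - x))) = - Real.log (x / (1 - x)) := by
      rw [e1, ← Real.log_inv, inv_div]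
    have e3 : 4 * (1 - x) * (1 - (1 - x)) = 4 * x * (1 - x) := by ring
    rw [hv, hv, e2, e3]; ring
  -- key function F
  set F : ℝ → ℝ := fun x => t * (x - 1 / 2) - (b - 1 / 2) * Real.log (x / (1 - x)) with hF
  have hFderiv : ∀ x : ℝ, 0 < x → x < 1 →
      HasDerivAt F (t * 1 - (b - 1 / 2) * (1 / (x * (1 - x)))) x := by
    intro x h0 h1
    exact (((hasDerivAt_id x).sub_const (1 / 2)).const_mul t).sub
      ((hasDerivAt_L x h0 h1).const_mul (b - 1 / 2))
  have hx01 : ∀ x ∈ Set.Icc (1/2 : ℝ) b, 0 < x ∧ x < 1 := by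
    intro x hx; exact ⟨by linarith [hx.1], by linarith [hx.2]⟩
  -- F is concave on [1/2, b]
  have hconc : ConcaveOn ℝ (Set.Icc (1/2 : ℝ) b) F := by
    apply AntitoneOn.concaveOn_of_deriv (convex_Icc _ _)
    · intro x hx
      obtain ⟨h0, h1⟩ := hx01 x hx
      exact (hFderiv x h0 h1).continuousAt.continuousWithinAt
    · intro x hx
      rw [interior_Icc] at hx
      obtain ⟨h0, h1⟩ := hx01 x (Set.Ioo_subset_Icc_self hx)
      exact (hFderiv x h0 h1).differentiableAt.differentiableWithinAt
    · rw [interior_Icc]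
      intro x hx y hy hxy
      obtain ⟨hx0, hx1⟩ := hx01 x (Set.Ioo_subset_Icc_self hx)
      obtain ⟨hy0, hy1⟩ := hx01 y (Set.Ioo_subset_Icc_self hy)
      rw [(hFderiv x hx0 hx1).deriv, (hFderiv y hy0 hy1).deriv]
      have hPy : (0:ℝ) < y * (1 - y) := by nlinarith
      have hPle : y * (1 - y) ≤ x * (1 - x) := by nlinarith [hx.1]
      have : 1 / (x * (1 - x)) ≤ 1 / (y * (1 - y)) :=
        one_div_le_one_div_of_le hPy hPle
      nlinarith [hb1]
  have hF12 : F (1/2) = 0 := by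
    simp only [hF]
    norm_num
  have hFb : F b = 0 := by
    simp only [hF, hlogbb]; ring
  -- F ≥ 0 on [1/2, b]
  have hFnn : ∀ x ∈ Set.Icc (1/2 : ℝ) b, 0 ≤ F x := by
    intro x hx
    obtain ⟨hxl, hxr⟩ := hx
    have hbb : (0:ℝ) < b - 1/2 := by linarith
    set θ : ℝ := (x - 1/2) / (b - 1/2) with hθ
    have hθ0 : 0 ≤ θ := div_nonneg (by linarith) hbb.le
    have hθ1 : θ ≤ 1 := (div_le_one hbb).mpr (by linarith)
    have hcomb := hconc.2 (Set.mem_Icc.mpr ⟨le_refl _, by linarith⟩)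
      (Set.mem_Icc.mpr ⟨by linarith, le_refl _⟩)
      (by linarith : (0:ℝ) ≤ 1 - θ) hθ0 (by ring)
    have hxeq : (1 - θ) • (1/2 : ℝ) + θ • b = x := by
      simp only [smul_eq_mul]
      have h' : θ * (b - 1/2) = x - 1/2 := div_mul_cancel₀ _ hbb.ne'
      linear_combination h'
    rw [hxeq, hF12, hFb] at hcomb
    simpa using hcomb
  -- derivative of v
  have hvfun : v = fun x => (lam / σ ^ 2) * (Real.log (x / (1 - x))) ^ 2
      + (1 / 2) * Real.log (4 * x * (1 - x)) := funext hv
  have klam : lam / σ ^ 2 = (b - 1/2) / (2 * t) := by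
    rw [hlam, hlogbb]
    field_simp
  have hvderiv : ∀ x : ℝ, 0 < x → x < 1 →
      HasDerivAt v (-(F x) / (t * (x * (1 - x)))) x := by
    intro x h0 h1
    have hd1 : HasDerivAt (fun y : ℝ => (Real.log (y / (1 - y))) ^ 2)
        (2 * Real.log (x / (1 - x)) * (1 / (x * (1 - x)))) x := by
      simpa using (hasDerivAt_L x h0 h1).fun_pow 2
    have hd : HasDerivAt v
        ((lam / σ ^ 2) * (2 * Real.log (x / (1 - x)) * (1 / (x * (1 - x))))
          + (1 / 2) * ((1 - 2 * x) / (x * (1 - x)))) x := by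
      rw [hvfun]
      exact (hd1.const_mul (lam / σ ^ 2)).add ((hasDerivAt_Q x h0 h1).const_mul (1/2))
    convert hd using 1
    rw [klam]
    simp only [hF]
    have h1x : (0:ℝ) < 1 - x := by linarith
    field_simp
    ring
  -- part (ii)
  have hAnti : AntitoneOn v (Set.Icc (1/2 : ℝ) b) := by
    apply antitoneOn_of_deriv_nonpos (convex_Icc _ _)
    · intro x hx
      obtain ⟨h0, h1⟩ := hx01 x hx
      exact (hvderiv x h0 h1).continuousAt.continuousWithinAt
    · intro x hx
      rw [interior_Icc] at hx
      obtain ⟨h0, h1⟩ := hx01 x (Set.Ioo_subset_Icc_self hx)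
      exact (hvderiv x h0 h1).differentiableAt.differentiableWithinAt
    · intro x hx
      rw [interior_Icc] at hx
      obtain ⟨h0, h1⟩ := hx01 x (Set.Ioo_subset_Icc_self hx)
      rw [(hvderiv x h0 h1).deriv]
      apply div_nonpos_of_nonpos_of_nonneg
      · have := hFnn x (Set.Ioo_subset_Icc_self hx)
        linarith
      · have : (0:ℝ) < x * (1 - x) := by nlinarith
        positivity
  refine ⟨sym, hAnti, ?_⟩
  -- part (iii): v b ≤ v x ≤ v (1/2) on [a, b]
  have hbnd : ∀ x ∈ Set.Icc a b, v b ≤ v x ∧ v x ≤ v (1/2) := by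
    intro x hx
    obtain ⟨hxl, hxr⟩ := hx
    have ha0 : 0 < a := by rw [ha]; linarith
    rcases le_or_gt (1/2 : ℝ) x with hge | hlt
    · constructor
      · exact hAnti (Set.mem_Icc.mpr ⟨hge, hxr⟩)
          (Set.mem_Icc.mpr ⟨by linarith, le_refl _⟩) hxr
      · exact hAnti (Set.mem_Icc.mpr ⟨le_refl _, by linarith⟩)
          (Set.mem_Icc.mpr ⟨hge, hxr⟩) hge
    · have hx0 : 0 < x := lt_of_lt_of_le ha0 hxl
      have hx1 : x < 1 := by linarith
      have hsym : v (1 - x) = v x := sym x ⟨hx0, hx1⟩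
      have h1xm : 1 - x ∈ Set.Icc (1/2 : ℝ) b := by
        constructor
        · linarith
        · rw [ha] at hxl; linarith
      constructor
      · rw [← hsym]
        exact hAnti h1xm (Set.mem_Icc.mpr ⟨by linarith, le_refl _⟩) h1xm.2
      · rw [← hsym]
        exact hAnti (Set.mem_Icc.mpr ⟨le_refl _, by linarith⟩) h1xm h1xm.1
  intro π hπ π' hπ'
  have h1 := (hbnd π hπ).1
  have h2 := (hbnd π' hπ').2
  rw [hc]
  linarith
end

section
/- Let μ ∈ ℝ, σ > 0, h > 0 and x > 0. Let (ξ_n)_{n≥0} be an i.i.d. sequence of standard Gaussian random variables and set Z_n = exp(σ√h·ξ_n + (μ - σ²/2)h). Define A(h) = sup_{a ∈ [0,1]} E[log(a·Z_0 + (1-a))]. Then for every N ∈ ℕ, sup E[log X_N] = N·A(h) + log x, where the supremum is over all sequences (a_0, …, a_{N-1}) of [0,1]-valued random variables such that a_n is measurable with respect to σ(Z_0, …, Z_{n-1}) for each n, and X_N = x·∏_{n=0}^{N-1}(a_n·Z_n + (1 - a_n)). -/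
open MeasureTheory ProbabilityTheory

section Aux

lemma aux_pos {a z : ℝ} (ha0 : 0 ≤ a) (ha1 : a ≤ 1) (hz : 0 < z) :
    0 < a * z + (1 - a) := by
  rcases le_or_gt 1 z with h1 | h1
  · nlinarith [mul_le_mul_of_nonneg_left h1 ha0]
  · nlinarith [mul_nonneg (sub_nonneg.2 ha1) (sub_nonneg.2 h1.le)]

lemma aux_logabs {a z : ℝ} (ha0 : 0 ≤ a) (ha1 : a ≤ 1) (hz : 0 < z) :
    |Real.log (a * z + (1 - a))| ≤ |Real.log z| := by
  have hpos := aux_pos ha0 ha1 hz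
  rw [abs_le]
  constructor
  · rcases le_or_gt 1 z with h1 | h1
    · have h2 : (1:ℝ) ≤ a * z + (1 - a) := by
        nlinarith [mul_le_mul_of_nonneg_left h1 ha0]
      have h3 := Real.log_nonneg h2
      linarith [abs_nonneg (Real.log z)]
    · have hzle : z ≤ a * z + (1 - a) := by
        nlinarith [mul_nonneg (sub_nonneg.2 ha1) (sub_nonneg.2 h1.le)]
      have hlog : Real.log z ≤ Real.log (a * z + (1 - a)) :=
        Real.log_le_log hz hzle
      linarith [neg_abs_le (Real.log z)]
  · rcases le_or_gt 1 z with h1 | h1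
    · have hle : a * z + (1 - a) ≤ z := by
        nlinarith [mul_le_mul_of_nonneg_left h1 ha0]
      have := Real.log_le_log hpos hle
      linarith [le_abs_self (Real.log z)]
    · have hle : a * z + (1 - a) ≤ 1 := by
        nlinarith [mul_le_mul_of_nonneg_left h1.le ha0]
      have := Real.log_nonpos hpos.le hle
      linarith [abs_nonneg (Real.log z)]

lemma aux_gauss_int (s c : ℝ) :
    Integrable (fun t : ℝ => |s * t + c|) (gaussianReal 0 1) := by
  rw [gaussianReal_of_var_ne_zero _ one_ne_zero,
    integrable_withDensity_iff (measurable_gaussianPDF 0 1)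
      (Filter.Eventually.of_forall fun x => ENNReal.ofReal_lt_top)]
  have hval : ∀ x : ℝ, ((gaussianPDF 0 1 x).toReal)
      = (Real.sqrt (2 * Real.pi))⁻¹ * Real.exp (-(1/2) * x ^ 2) := by
    intro x
    rw [gaussianPDF, ENNReal.toReal_ofReal (gaussianPDFReal_nonneg _ _ _),
      gaussianPDFReal]
    simp only [NNReal.coe_one, mul_one, sub_zero]
    congr 1
    ring
  have h12 : (0:ℝ) < 1/2 := by norm_num
  have h1 : Integrable (fun x : ℝ => |x| * Real.exp (-(1/2) * x ^ 2)) := by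
    refine (integrable_mul_exp_neg_mul_sq h12).abs.congr
      (Filter.Eventually.of_forall fun x => ?_)
    show |x * Real.exp (-(1/2) * x ^ 2)| = |x| * Real.exp (-(1/2) * x ^ 2)
    rw [abs_mul, abs_of_pos (Real.exp_pos _)]
  have hB : Integrable (fun x : ℝ =>
      (|s| * |x| + |c|) * ((Real.sqrt (2 * Real.pi))⁻¹ * Real.exp (-(1/2) * x ^ 2))) := by
    have := ((h1.const_mul (|s| * (Real.sqrt (2 * Real.pi))⁻¹)).add
      ((integrable_exp_neg_mul_sq h12).const_mul (|c| * (Real.sqrt (2 * Real.pi))⁻¹)))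
    refine this.congr (Filter.Eventually.of_forall fun x => ?_)
    simp only [Pi.add_apply]
    ring
  refine hB.mono' ?_ (Filter.Eventually.of_forall fun x => ?_)
  · exact (((measurable_const.mul measurable_id').add_const c).abs.mul
      ((measurable_gaussianPDF 0 1).ennreal_toReal)).aestronglyMeasurable
  · rw [Real.norm_eq_abs, abs_of_nonneg (mul_nonneg (abs_nonneg _) ENNReal.toReal_nonneg),
      hval]
    refine mul_le_mul_of_nonneg_right ?_ (by positivity)
    calc |s * x + c| ≤ |s * x| + |c| := abs_add_le _ _
      _ = |s| * |x| + |c| := by rw [abs_mul]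

lemma aux_indep_mono {Ω : Type*} {m0 : MeasurableSpace Ω} {μ : Measure Ω}
    {m1 m2 m1' m2' : MeasurableSpace Ω}
    (h : Indep m1 m2 μ) (h1 : m1' ≤ m1) (h2 : m2' ≤ m2) : Indep m1' m2' μ := by
  rw [Indep_iff] at h ⊢
  exact fun t1 t2 ht1 ht2 => h t1 t2 (h1 _ ht1) (h2 _ ht2)

lemma aux_meas_log (s c b : ℝ) :
    Measurable fun t : ℝ => Real.log (b * Real.exp (s * t + c) + (1 - b)) :=
  ((measurable_const.mul (((measurable_const.mul measurable_id').add_const c).exp)).add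
    measurable_const).log

lemma aux_key {Ω : Type*} [MeasurableSpace Ω] (P : Measure Ω) [IsProbabilityMeasure P]
    (a W : Ω → ℝ) (hma : Measurable a) (ha : ∀ ω, a ω ∈ Set.Icc (0:ℝ) 1)
    (hmW : Measurable W) (hlaw : P.map W = gaussianReal 0 1)
    (hind : IndepFun a W P) (s c A : ℝ)
    (hA : ∀ b ∈ Set.Icc (0:ℝ) 1,
      ∫ t, Real.log (b * Real.exp (s * t + c) + (1 - b)) ∂(gaussianReal 0 1) ≤ A) :
    ∫ ω, Real.log (a ω * Real.exp (s * W ω + c) + (1 - a ω)) ∂P ≤ A := by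
  set π : Measure ℝ := P.map a with hπdef
  haveI : IsProbabilityMeasure π := Measure.isProbabilityMeasure_map hma.aemeasurable
  set F : ℝ × ℝ → ℝ := fun p => Real.log (p.1 * Real.exp (s * p.2 + c) + (1 - p.1)) with hF
  have hmF : Measurable F :=
    ((measurable_fst.mul (((measurable_const.mul measurable_snd).add_const c).exp)).add
      (measurable_const.sub measurable_fst)).log
  have hπc : π ((Set.Icc (0:ℝ) 1)ᶜ) = 0 := by
    rw [hπdef, Measure.map_apply hma measurableSet_Icc.compl]
    have : a ⁻¹' (Set.Icc (0:ℝ) 1)ᶜ = ∅ := by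
      ext ω; simp [ha ω]
    rw [this, measure_empty]
  have hae : ∀ᵐ p ∂(π.prod (gaussianReal 0 1)), p.1 ∈ Set.Icc (0:ℝ) 1 := by
    rw [ae_iff]
    have hset : {p : ℝ × ℝ | ¬ p.1 ∈ Set.Icc (0:ℝ) 1}
        = ((Set.Icc (0:ℝ) 1)ᶜ) ×ˢ (Set.univ : Set ℝ) := by
      ext p; simp
    rw [hset, Measure.prod_prod, hπc, zero_mul]
  have hIb : Integrable (fun p : ℝ × ℝ => |s * p.2 + c|) (π.prod (gaussianReal 0 1)) := by
    have hmf : Measurable (fun t : ℝ => |s * t + c|) :=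
      ((measurable_const.mul measurable_id').add_const c).abs
    have hmap2 : (π.prod (gaussianReal 0 1)).map Prod.snd = (gaussianReal 0 1) := by
      rw [Measure.map_snd_prod]; simp
    have := (integrable_map_measure hmf.aestronglyMeasurable
      measurable_snd.aemeasurable).mp (by rw [hmap2]; exact aux_gauss_int s c)
    exact this
  have hIntF : Integrable F (π.prod (gaussianReal 0 1)) := by
    refine hIb.mono' hmF.aestronglyMeasurable ?_
    filter_upwards [hae] with p hp
    rw [Real.norm_eq_abs]
    have := aux_logabs hp.1 hp.2 (Real.exp_pos (s * p.2 + c))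
    rwa [Real.log_exp] at this
  have hmap : P.map (fun ω => (a ω, W ω)) = π.prod (gaussianReal 0 1) := by
    rw [hπdef, ← hlaw]
    exact (indepFun_iff_map_prod_eq_prod_map_map hma.aemeasurable hmW.aemeasurable).mp hind
  have hLHS : ∫ ω, Real.log (a ω * Real.exp (s * W ω + c) + (1 - a ω)) ∂P
      = ∫ p, F p ∂(π.prod (gaussianReal 0 1)) := by
    rw [← hmap, integral_map (hma.aemeasurable.prodMk hmW.aemeasurable)
      hmF.aestronglyMeasurable]
  rw [hLHS, MeasureTheory.integral_prod _ hIntF]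
  have haeπ : ∀ᵐ b ∂π, b ∈ Set.Icc (0:ℝ) 1 := by
    rw [ae_iff]
    have hs : {b : ℝ | ¬ b ∈ Set.Icc (0:ℝ) 1} = (Set.Icc (0:ℝ) 1)ᶜ := rfl
    rw [hs]
    exact hπc
  calc ∫ b, (∫ t, F (b, t) ∂(gaussianReal 0 1)) ∂π ≤ ∫ _b, A ∂π := by
        refine integral_mono_ae hIntF.integral_prod_left (integrable_const _) ?_
        filter_upwards [haeπ] with b hb
        exact hA b hb
    _ = A := by simp

end Aux

/-- Proposition 4.1 (the h-investor): with `(ξ_n)` i.i.d. standard Gaussians,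
one-period returns `Z_n = exp(σ√h ξ_n + (μ - σ²/2)h)`, and
`A(h) = sup_{a ∈ [0,1]} E[log(a Z_0 + (1-a))]`, for every `N ∈ ℕ` the supremum
of `E[log X_N]` over all adapted `[0,1]`-valued strategies `(a_n)` (with `a_n`
measurable with respect to `σ(Z_0,…,Z_{n-1})`), where
`X_N = x ∏_{n<N} (a_n Z_n + 1 - a_n)`, equals `N·A(h) + log x`. -/
theorem stmt_15 (μ σ h x : ℝ) (hσ : 0 < σ) (hh : 0 < h) (hx : 0 < x)
    {Ω : Type*} [MeasurableSpace Ω] (P : Measure Ω) [IsProbabilityMeasure P]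
    (ξ : ℕ → Ω → ℝ) (hmeas : ∀ n, Measurable (ξ n))
    (hindep : iIndepFun ξ P)
    (hgauss : ∀ n, P.map (ξ n) = gaussianReal 0 1)
    (Z : ℕ → Ω → ℝ)
    (hZ : ∀ n ω, Z n ω = Real.exp (σ * Real.sqrt h * ξ n ω + (μ - σ ^ 2 / 2) * h))
    (A : ℝ)
    (hA : A = sSup {r : ℝ | ∃ a ∈ Set.Icc (0 : ℝ) 1,
        r = ∫ ω, Real.log (a * Z 0 ω + (1 - a)) ∂P})
    (N : ℕ) :
    sSup {r : ℝ | ∃ a : ℕ → Ω → ℝ,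
        (∀ n ω, a n ω ∈ Set.Icc (0 : ℝ) 1) ∧
        (∀ n, @Measurable Ω ℝ
          (MeasurableSpace.comap (fun ω (i : Fin n) => Z i ω) inferInstance) _ (a n)) ∧
        r = ∫ ω, Real.log
          (x * ∏ n ∈ Finset.range N, (a n ω * Z n ω + (1 - a n ω))) ∂P}
      = N * A + Real.log x := by
  classical
  set s : ℝ := σ * Real.sqrt h with hs
  set c : ℝ := (μ - σ ^ 2 / 2) * h with hc
  -- basic facts about Z
  have hZe : ∀ n, Z n = fun ω => Real.exp (s * ξ n ω + c) := fun n => funext fun ω => hZ n ω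
  have hmZ : ∀ n, Measurable (Z n) := fun n => by
    rw [hZe n]; exact (((measurable_const.mul (hmeas n)).add_const c).exp)
  have hZpos : ∀ n ω, 0 < Z n ω := fun n ω => by rw [hZ n ω]; exact Real.exp_pos _
  -- the one-period value function
  set f : ℝ → ℝ :=
    fun b => ∫ t, Real.log (b * Real.exp (s * t + c) + (1 - b)) ∂(gaussianReal 0 1) with hf
  have hcov : ∀ (n : ℕ) (b : ℝ), ∫ ω, Real.log (b * Z n ω + (1 - b)) ∂P = f b := by
    intro n b
    simp only [hZ, hf]
    rw [← hgauss n, integral_map (hmeas n).aemeasurable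
      (aux_meas_log s c b).aestronglyMeasurable]
  -- upper bound for f on [0,1]
  have hint_t : ∀ b, b ∈ Set.Icc (0:ℝ) 1 →
      Integrable (fun t : ℝ => Real.log (b * Real.exp (s * t + c) + (1 - b)))
        (gaussianReal 0 1) := by
    intro b hb
    refine (aux_gauss_int s c).mono' (aux_meas_log s c b).aestronglyMeasurable
      (Filter.Eventually.of_forall fun t => ?_)
    rw [Real.norm_eq_abs]
    have := aux_logabs hb.1 hb.2 (Real.exp_pos (s * t + c))
    rwa [Real.log_exp] at this
  have hfB : ∀ b ∈ Set.Icc (0:ℝ) 1, f b ≤ ∫ t, |s * t + c| ∂(gaussianReal 0 1) := by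
    intro b hb
    refine integral_mono (hint_t b hb) (aux_gauss_int s c) fun t => ?_
    have h1 := aux_logabs hb.1 hb.2 (Real.exp_pos (s * t + c))
    rw [Real.log_exp] at h1
    exact (le_abs_self _).trans h1
  -- rewrite the set defining A
  have hS0 : {r : ℝ | ∃ a ∈ Set.Icc (0:ℝ) 1, r = ∫ ω, Real.log (a * Z 0 ω + (1 - a)) ∂P}
      = {r : ℝ | ∃ b ∈ Set.Icc (0:ℝ) 1, r = f b} := by
    ext r
    simp only [Set.mem_setOf_eq]
    constructor
    · rintro ⟨b, hb, rfl⟩; exact ⟨b, hb, (hcov 0 b)⟩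
    · rintro ⟨b, hb, rfl⟩; exact ⟨b, hb, (hcov 0 b).symm⟩
  have hAeq : A = sSup {r : ℝ | ∃ b ∈ Set.Icc (0:ℝ) 1, r = f b} := by rw [hA, hS0]
  have hbdd : BddAbove {r : ℝ | ∃ b ∈ Set.Icc (0:ℝ) 1, r = f b} := by
    refine ⟨∫ t, |s * t + c| ∂(gaussianReal 0 1), ?_⟩
    rintro r ⟨b, hb, rfl⟩
    exact hfB b hb
  have hf0 : f 0 = 0 := by simp [hf]
  have h0mem : (0:ℝ) ∈ {r : ℝ | ∃ b ∈ Set.Icc (0:ℝ) 1, r = f b} :=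
    ⟨0, ⟨le_refl 0, zero_le_one⟩, hf0.symm⟩
  have hfleA : ∀ b ∈ Set.Icc (0:ℝ) 1, f b ≤ A := by
    intro b hb
    rw [hAeq]
    exact le_csSup hbdd ⟨b, hb, rfl⟩
  -- integrability of each one-period log-return
  have hIntg : ∀ (n : ℕ) (a : Ω → ℝ), Measurable a → (∀ ω, a ω ∈ Set.Icc (0:ℝ) 1) →
      Integrable (fun ω => Real.log (a ω * Z n ω + (1 - a ω))) P := by
    intro n a hma ha
    have hIb : Integrable (fun ω => |s * ξ n ω + c|) P := by
      have := (integrable_map_measure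
        (((measurable_const.mul measurable_id').add_const c).abs).aestronglyMeasurable
        (hmeas n).aemeasurable).mp (by rw [hgauss n]; exact aux_gauss_int s c)
      exact this
    refine hIb.mono' ?_ (Filter.Eventually.of_forall fun ω => ?_)
    · exact ((hma.mul (hmZ n)).add (measurable_const.sub hma)).log.aestronglyMeasurable
    · rw [Real.norm_eq_abs]
      have h1 := aux_logabs (ha ω).1 (ha ω).2 (hZpos n ω)
      calc |Real.log (a ω * Z n ω + (1 - a ω))| ≤ |Real.log (Z n ω)| := h1
        _ = |s * ξ n ω + c| := by rw [hZ n ω, Real.log_exp]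
  -- independence of the strategy from the current return
  have hindepFun : ∀ (n : ℕ) (a : Ω → ℝ),
      (@Measurable Ω ℝ
        (MeasurableSpace.comap (fun ω (i : Fin n) => Z i ω) inferInstance) _ a) →
      IndepFun a (ξ n) P := by
    intro n a hadapt
    have hdisj : Disjoint (Finset.range n) ({n} : Finset ℕ) := by
      simp [Finset.disjoint_singleton_right]
    have hIF := hindep.indepFun_finset (Finset.range n) {n} hdisj hmeas
    rw [IndepFun_iff_Indep] at hIF ⊢
    refine aux_indep_mono hIF ?_ ?_
    · -- left side
      have h1 : MeasurableSpace.comap a inferInstance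
          ≤ MeasurableSpace.comap (fun ω (i : Fin n) => Z i ω) inferInstance :=
        Measurable.comap_le hadapt
      refine h1.trans ?_
      set φ : ({j // j ∈ Finset.range n} → ℝ) → (Fin n → ℝ) :=
        fun v i => Real.exp (s * v ⟨(i : ℕ), Finset.mem_range.mpr i.isLt⟩ + c) with hφdef
      have hfun : (fun ω (i : Fin n) => Z i ω)
          = φ ∘ (fun ω (j : {j // j ∈ Finset.range n}) => ξ (j : ℕ) ω) := by
        funext ω
        funext i
        simp only [Function.comp_apply, hφdef]
        exact hZ i ω
      have hφ : Measurable φ := by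
        refine measurable_pi_lambda _ fun i => ?_
        have hev : Measurable fun v : {j // j ∈ Finset.range n} → ℝ =>
            v ⟨(i : ℕ), Finset.mem_range.mpr i.isLt⟩ := measurable_pi_apply _
        exact ((hev.const_mul s).add_const c).exp
      rw [hfun, ← MeasurableSpace.comap_comp]
      exact MeasurableSpace.comap_mono hφ.comap_le
    · -- right side
      have hfun : ξ n = (fun (v : {j // j ∈ ({n} : Finset ℕ)} → ℝ) =>
          v ⟨n, Finset.mem_singleton_self n⟩)
            ∘ (fun ω (j : {j // j ∈ ({n} : Finset ℕ)}) => ξ (j : ℕ) ω) :=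
        rfl
      rw [hfun, ← MeasurableSpace.comap_comp]
      exact MeasurableSpace.comap_mono (measurable_pi_apply _).comap_le
  -- each one-period expected log-return is at most A
  have hleA : ∀ (n : ℕ) (a : Ω → ℝ), Measurable a → (∀ ω, a ω ∈ Set.Icc (0:ℝ) 1) →
      IndepFun a (ξ n) P →
      ∫ ω, Real.log (a ω * Z n ω + (1 - a ω)) ∂P ≤ A := by
    intro n a hma ha hind
    have := aux_key P a (ξ n) hma ha (hmeas n) (hgauss n) hind s c A hfleA
    simpa only [hZ] using this
  -- decomposition of the expected log-wealth
  have hdecomp : ∀ (a : ℕ → Ω → ℝ), (∀ n ω, a n ω ∈ Set.Icc (0:ℝ) 1) →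
      (∀ n, Measurable (a n)) →
      ∫ ω, Real.log (x * ∏ n ∈ Finset.range N, (a n ω * Z n ω + (1 - a n ω))) ∂P
        = Real.log x
          + ∑ n ∈ Finset.range N, ∫ ω, Real.log (a n ω * Z n ω + (1 - a n ω)) ∂P := by
    intro a hIcc hma
    have hterm : ∀ n ω, 0 < a n ω * Z n ω + (1 - a n ω) :=
      fun n ω => aux_pos (hIcc n ω).1 (hIcc n ω).2 (hZpos n ω)
    have hpt : ∀ ω, Real.log (x * ∏ n ∈ Finset.range N, (a n ω * Z n ω + (1 - a n ω)))
        = Real.log x + ∑ n ∈ Finset.range N, Real.log (a n ω * Z n ω + (1 - a n ω)) := by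
      intro ω
      rw [Real.log_mul (ne_of_gt hx)
        (ne_of_gt (Finset.prod_pos fun n _ => hterm n ω)),
        Real.log_prod fun n _ => ne_of_gt (hterm n ω)]
    simp only [hpt]
    rw [integral_add (integrable_const _)
      (integrable_finset_sum _ fun n _ => hIntg n (a n) (hma n) (fun ω => hIcc n ω)),
      integral_finset_sum _ (fun n _ => hIntg n (a n) (hma n) (fun ω => hIcc n ω))]
    simp
  -- ambient measurability of adapted strategies
  have hambient : ∀ (n : ℕ) (a : Ω → ℝ),
      (@Measurable Ω ℝ
        (MeasurableSpace.comap (fun ω (i : Fin n) => Z i ω) inferInstance) _ a) →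
      Measurable a := by
    intro n a hadapt
    exact hadapt.mono
      ((measurable_pi_lambda (fun ω (i : Fin n) => Z i ω) fun i => hmZ i).comap_le) le_rfl
  -- the big set and its upper bound
  have hub : ∀ r ∈ {r : ℝ | ∃ a : ℕ → Ω → ℝ,
      (∀ n ω, a n ω ∈ Set.Icc (0 : ℝ) 1) ∧
      (∀ n, @Measurable Ω ℝ
        (MeasurableSpace.comap (fun ω (i : Fin n) => Z i ω) inferInstance) _ (a n)) ∧
      r = ∫ ω, Real.log
        (x * ∏ n ∈ Finset.range N, (a n ω * Z n ω + (1 - a n ω))) ∂P},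
      r ≤ N * A + Real.log x := by
    rintro r ⟨a, hIcc, hadapt, rfl⟩
    have hma : ∀ n, Measurable (a n) := fun n => hambient n (a n) (hadapt n)
    rw [hdecomp a hIcc hma]
    have hsum : ∑ n ∈ Finset.range N, ∫ ω, Real.log (a n ω * Z n ω + (1 - a n ω)) ∂P
        ≤ ∑ j ∈ Finset.range N, A :=
      Finset.sum_le_sum fun n _ =>
        hleA n (a n) (hma n) (fun ω => hIcc n ω) (hindepFun n (a n) (hadapt n))
    have h2 : (∑ j ∈ Finset.range N, A) = (N : ℝ) * A := by
      rw [Finset.sum_const, Finset.card_range, nsmul_eq_mul]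
    linarith
  -- constant strategies give members of the big set
  have hconstmem : ∀ b ∈ Set.Icc (0:ℝ) 1,
      (Real.log x + N * f b) ∈ {r : ℝ | ∃ a : ℕ → Ω → ℝ,
      (∀ n ω, a n ω ∈ Set.Icc (0 : ℝ) 1) ∧
      (∀ n, @Measurable Ω ℝ
        (MeasurableSpace.comap (fun ω (i : Fin n) => Z i ω) inferInstance) _ (a n)) ∧
      r = ∫ ω, Real.log
        (x * ∏ n ∈ Finset.range N, (a n ω * Z n ω + (1 - a n ω))) ∂P} := by
    intro b hb
    refine ⟨fun _ _ => b, fun n ω => hb, fun n => measurable_const, ?_⟩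
    rw [hdecomp (fun _ _ => b) (fun n ω => hb) (fun n => measurable_const)]
    have hsum : ∑ n ∈ Finset.range N, ∫ ω, Real.log (b * Z n ω + (1 - b)) ∂P
        = (N : ℝ) * f b := by
      rw [Finset.sum_congr rfl fun n _ => hcov n b, Finset.sum_const, Finset.card_range,
        nsmul_eq_mul]
    rw [hsum]
  have hBdd : BddAbove {r : ℝ | ∃ a : ℕ → Ω → ℝ,
      (∀ n ω, a n ω ∈ Set.Icc (0 : ℝ) 1) ∧
      (∀ n, @Measurable Ω ℝ
        (MeasurableSpace.comap (fun ω (i : Fin n) => Z i ω) inferInstance) _ (a n)) ∧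
      r = ∫ ω, Real.log
        (x * ∏ n ∈ Finset.range N, (a n ω * Z n ω + (1 - a n ω))) ∂P} :=
    ⟨N * A + Real.log x, fun r hr => hub r hr⟩
  have h0Icc : (0:ℝ) ∈ Set.Icc (0:ℝ) 1 := ⟨le_refl 0, zero_le_one⟩
  apply le_antisymm
  · exact csSup_le ⟨_, hconstmem 0 h0Icc⟩ hub
  · -- lower bound
    rcases Nat.eq_zero_or_pos N with hN | hN
    · subst hN
      have hmem := hconstmem 0 h0Icc
      have hle := le_csSup hBdd hmem
      simpa [hf0] using hle
    · refine le_of_forall_pos_le_add fun ε hε => ?_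
      have hNpos : (0:ℝ) < N := by exact_mod_cast hN
      have hlt : A - ε / N < sSup {r : ℝ | ∃ b ∈ Set.Icc (0:ℝ) 1, r = f b} := by
        rw [← hAeq]
        have : (0:ℝ) < ε / N := div_pos hε hNpos
        linarith
      obtain ⟨r, hrS, hr⟩ := exists_lt_of_lt_csSup ⟨0, h0mem⟩ hlt
      obtain ⟨b, hb, rfl⟩ := hrS
      have hle := le_csSup hBdd (hconstmem b hb)
      have h3 : (N:ℝ) * (A - ε / N) ≤ (N:ℝ) * f b :=
        mul_le_mul_of_nonneg_left hr.le hNpos.le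
      have h4 : (N:ℝ) * (ε / N) = ε := by field_simp
      nlinarith [hle]
end
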